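/- arXiv:2208.04468 — 2 statements merged into one kernel-verified Lean document; each statement's English description precedes it below -/
import Mathlib

section
/- For (k₁,k₂) jointly Gaussian with mean zero, unit variances, and correlation ρ ∈ [-1,1], E[max(0,k₁)·max(0,k₂)] = (1/(2π))·(sin(arccos ρ) + (π - arccos ρ)·ρ). -/
open MeasureTheory ProbabilityTheory Real

lemma gauss_prod_eq :
    (gaussianReal 0 1).prod (gaussianReal 0 1) =
      ((volume : Measure ℝ).prod (volume : Measure ℝ)).withDensity
        (fun p => ((gaussianPDFReal 0 1 p.1 * gaussianPDFReal 0 1 p.2).toNNReal : ENNReal)) := by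
  have hm : Measurable (gaussianPDF 0 1) := measurable_gaussianPDF 0 1
  refine Measure.prod_eq fun s t hs ht => ?_
  rw [withDensity_apply _ (hs.prod ht), ← Measure.prod_restrict]
  have h : ∀ p : ℝ × ℝ, ((gaussianPDFReal 0 1 p.1 * gaussianPDFReal 0 1 p.2).toNNReal : ENNReal)
      = gaussianPDF 0 1 p.1 * gaussianPDF 0 1 p.2 := by
    intro p
    rw [gaussianPDF, gaussianPDF, ← ENNReal.ofReal_mul (gaussianPDFReal_nonneg _ _ _)]
    rfl
  simp_rw [h]
  rw [lintegral_prod_mul hm.aemeasurable hm.aemeasurable,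
    ← gaussianReal_apply 0 one_ne_zero s, ← gaussianReal_apply 0 one_ne_zero t]

lemma radial_integral : ∫ r in Set.Ioi (0:ℝ), r ^ 3 * rexp (-r ^ 2 / 2) = 2 := by
  have hderiv : ∀ r ∈ Set.Ici (0:ℝ),
      HasDerivAt (fun r : ℝ => -((r ^ 2 + 2) * rexp (-r ^ 2 / 2)))
        (r ^ 3 * rexp (-r ^ 2 / 2)) r := by
    intro r _
    have h1 : HasDerivAt (fun r : ℝ => -r ^ 2 / 2) (-r) r := by
      have h := ((hasDerivAt_pow 2 r).neg.div_const 2)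
      refine h.congr_deriv ?_
      push_cast
      ring
    have h2 : HasDerivAt (fun r : ℝ => rexp (-r ^ 2 / 2)) (rexp (-r ^ 2 / 2) * -r) r := h1.exp
    have h3 : HasDerivAt (fun r : ℝ => r ^ 2 + 2) (2 * r) r := by
      simpa using (hasDerivAt_pow 2 r).add_const 2
    have := (h3.mul h2).neg
    refine this.congr_deriv ?_
    ring
  have hint : IntegrableOn (fun r : ℝ => r ^ 3 * rexp (-r ^ 2 / 2)) (Set.Ioi 0) := by
    have h := integrable_rpow_mul_exp_neg_mul_sq (b := 1/2) (by norm_num) (s := 3) (by norm_num)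
    refine (h.congr (Filter.Eventually.of_forall fun x => ?_)).integrableOn
    beta_reduce
    rw [show ((3:ℝ)) = ((3:ℕ):ℝ) by norm_num, Real.rpow_natCast,
      show -(1/2 : ℝ) * x ^ 2 = -x ^ 2 / 2 by ring]
  have htop : Filter.Tendsto (fun r : ℝ => -((r ^ 2 + 2) * rexp (-r ^ 2 / 2)))
      Filter.atTop (nhds 0) := by
    have h1 : Filter.Tendsto (fun x : ℝ => -(2 * (x ^ 1 * rexp (-x)) + 2 * rexp (-x)))
        Filter.atTop (nhds 0) := by
      have ha := (tendsto_pow_mul_exp_neg_atTop_nhds_zero 1).const_mul 2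
      have hb := tendsto_exp_neg_atTop_nhds_zero.const_mul 2
      simpa using (ha.add hb).neg
    have h2 : Filter.Tendsto (fun r : ℝ => r ^ 2 / 2) Filter.atTop Filter.atTop :=
      (Filter.tendsto_pow_atTop two_ne_zero).atTop_div_const (by norm_num)
    refine (h1.comp h2).congr fun r => ?_
    simp only [Function.comp, pow_one]
    rw [show -(r ^ 2 / 2) = -r ^ 2 / 2 by ring]
    ring
  have := integral_Ioi_of_hasDerivAt_of_tendsto' hderiv hint htop
  rw [this]
  norm_num

lemma angular_integral {θ : ℝ} (hθ0 : 0 ≤ θ) (hθπ : θ ≤ π) :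
    ∫ φ in Set.Ioo (-π) π, max 0 (Real.cos φ) * max 0 (Real.cos (φ - θ)) =
      (Real.sin θ + (π - θ) * Real.cos θ) / 2 := by
  have hπ : (0:ℝ) < π := Real.pi_pos
  have hsub : Set.Ioc (θ - π/2) (π/2) ⊆ Set.Ioo (-π) π := by
    intro x hx
    constructor
    · have := hx.1; linarith
    · have := hx.2; linarith
  have key : Set.EqOn (fun φ => max 0 (Real.cos φ) * max 0 (Real.cos (φ - θ)))
      (Set.indicator (Set.Ioc (θ - π/2) (π/2)) (fun φ => Real.cos φ * Real.cos (φ - θ)))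
      (Set.Ioo (-π) π) := by
    intro φ hφ
    by_cases hmem : φ ∈ Set.Ioc (θ - π/2) (π/2)
    · rw [Set.indicator_of_mem hmem]
      have hc1 : 0 ≤ Real.cos φ := by
        refine Real.cos_nonneg_of_mem_Icc ⟨?_, hmem.2⟩
        have := hmem.1; linarith
      have hc2 : 0 ≤ Real.cos (φ - θ) := by
        refine Real.cos_nonneg_of_mem_Icc ⟨?_, ?_⟩
        · have := hmem.1; linarith
        · have := hmem.2; linarith
      simp [max_eq_right hc1, max_eq_right hc2]
    · rw [Set.indicator_of_notMem hmem]
      rcases not_and_or.mp (fun h => hmem ⟨h.1, h.2⟩) with h | h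
      · push_neg at h
        -- φ ≤ θ - π/2
        by_cases hhalf : φ ≤ -(π/2)
        · have hc : Real.cos φ ≤ 0 := by
            rw [← Real.cos_neg]
            refine Real.cos_nonpos_of_pi_div_two_le_of_le (by linarith) ?_
            have := hφ.1; linarith
          simp [max_eq_left hc]
        · push_neg at hhalf
          have hc : Real.cos (φ - θ) ≤ 0 := by
            rw [show φ - θ = -(θ - φ) by ring, Real.cos_neg]
            refine Real.cos_nonpos_of_pi_div_two_le_of_le (by linarith) (by linarith)
          simp [max_eq_left hc]
      · push_neg at h
        -- π/2 < φ
        have hc : Real.cos φ ≤ 0 := by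
          refine Real.cos_nonpos_of_pi_div_two_le_of_le h.le ?_
          have := hφ.2; linarith
        simp [max_eq_left hc]
  rw [setIntegral_congr_fun measurableSet_Ioo key,
    setIntegral_indicator measurableSet_Ioc,
    Set.inter_eq_self_of_subset_right hsub,
    ← intervalIntegral.integral_of_le (by linarith : θ - π/2 ≤ π/2)]
  have hFTC := intervalIntegral.integral_eq_sub_of_hasDerivAt
    (f := fun x => Real.sin (2*x - θ) / 4 + Real.cos θ / 2 * x)
    (f' := fun x => Real.cos x * Real.cos (x - θ))
    (a := θ - π/2) (b := π/2)
    (fun x _ => by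
      have h1 : HasDerivAt (fun x : ℝ => 2*x - θ) 2 x := by
        simpa using ((hasDerivAt_id x).const_mul 2).sub_const θ
      have h2 := (h1.sin.div_const 4).add ((hasDerivAt_id x).const_mul (Real.cos θ / 2))
      refine h2.congr_deriv ?_
      beta_reduce
      have e1 : Real.cos (2*x - θ) = Real.cos x * Real.cos (x - θ)
          - Real.sin x * Real.sin (x - θ) := by
        rw [show 2*x - θ = x + (x - θ) by ring, Real.cos_add]
      have e2 := Real.cos_sub x (x - θ)
      rw [show x - (x - θ) = θ by ring] at e2
      rw [e1, e2]
      ring)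
    ((Real.continuous_cos.mul (Real.continuous_cos.comp
      (continuous_id.sub continuous_const))).intervalIntegrable _ _)
  rw [hFTC]
  beta_reduce
  have e3 : Real.sin (2*(π/2) - θ) = Real.sin θ := by
    rw [show 2*(π/2) - θ = π - θ by ring, Real.sin_pi_sub]
  have e4 : Real.sin (2*(θ - π/2) - θ) = -Real.sin θ := by
    rw [show 2*(θ - π/2) - θ = -(π - θ) by ring, Real.sin_neg, Real.sin_pi_sub]
  rw [e3, e4]
  ring

/-- For `(k₁, k₂)` jointly Gaussian, mean zero, unit variances, correlation
`ρ ∈ [-1,1]` (realized as `k₁ = z₁`, `k₂ = ρ z₁ + √(1-ρ²) z₂` for independent standard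
normals `z₁, z₂`), `E[max(0,k₁) max(0,k₂)] = (1/(2π)) (sin(arccos ρ) + (π - arccos ρ) ρ)`. -/
theorem arcCosine_kernel_degree_one (ρ : ℝ) (hρ : ρ ∈ Set.Icc (-1 : ℝ) 1) :
    ∫ p : ℝ × ℝ, max 0 p.1 * max 0 (ρ * p.1 + Real.sqrt (1 - ρ ^ 2) * p.2)
        ∂((gaussianReal 0 1).prod (gaussianReal 0 1)) =
      (1 / (2 * π)) * (Real.sin (Real.arccos ρ) + (π - Real.arccos ρ) * ρ) := by
  obtain ⟨hρ1, hρ2⟩ := hρ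
  set θ := Real.arccos ρ with hθdef
  have hθ0 : 0 ≤ θ := Real.arccos_nonneg ρ
  have hθπ : θ ≤ π := Real.arccos_le_pi ρ
  have hcos : Real.cos θ = ρ := Real.cos_arccos hρ1 hρ2
  have hsin : Real.sqrt (1 - ρ^2) = Real.sin θ := (Real.sin_arccos ρ).symm
  have hπ : (0:ℝ) < π := Real.pi_pos
  have hmeas : Measurable fun p : ℝ × ℝ =>
      (gaussianPDFReal 0 1 p.1 * gaussianPDFReal 0 1 p.2).toNNReal :=
    (((measurable_gaussianPDFReal 0 1).comp measurable_fst).mul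
      ((measurable_gaussianPDFReal 0 1).comp measurable_snd)).real_toNNReal
  rw [gauss_prod_eq, integral_withDensity_eq_integral_smul hmeas]
  set F : ℝ × ℝ → ℝ := fun q => (2*π)⁻¹ * rexp (-(q.1^2 + q.2^2)/2) *
    (max 0 q.1 * max 0 (ρ * q.1 + Real.sqrt (1 - ρ^2) * q.2)) with hF
  have step1 : ∫ p : ℝ × ℝ, (gaussianPDFReal 0 1 p.1 * gaussianPDFReal 0 1 p.2).toNNReal •
      (max 0 p.1 * max 0 (ρ * p.1 + Real.sqrt (1 - ρ ^ 2) * p.2)) ∂(volume.prod volume)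
      = ∫ p : ℝ × ℝ, F p ∂(volume.prod volume) := by
    refine integral_congr_ae (Filter.Eventually.of_forall fun p => ?_)
    beta_reduce
    have hn : 0 ≤ gaussianPDFReal 0 1 p.1 * gaussianPDFReal 0 1 p.2 :=
      mul_nonneg (gaussianPDFReal_nonneg _ _ _) (gaussianPDFReal_nonneg _ _ _)
    rw [NNReal.smul_def, Real.coe_toNNReal _ hn, hF]
    have h2π : Real.sqrt (2*π) * Real.sqrt (2*π) = 2*π := Real.mul_self_sqrt (by positivity)
    have h2πinv : (Real.sqrt (2*π))⁻¹ * (Real.sqrt (2*π))⁻¹ = (2*π)⁻¹ := by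
      rw [← mul_inv, h2π]
    have hexp : rexp (-(p.1^2 + p.2^2)/2) = rexp (-p.1^2/2) * rexp (-p.2^2/2) := by
      rw [← Real.exp_add]; congr 1; ring
    simp only [gaussianPDFReal, NNReal.coe_one, mul_one, sub_zero]
    rw [smul_eq_mul, hexp, ← h2πinv]
    ring
  rw [step1, ← Measure.volume_eq_prod, ← integral_comp_polarCoord_symm F, polarCoord_target]
  have hEq : Set.EqOn (fun p : ℝ × ℝ => p.1 • F (polarCoord.symm p))
      (fun p : ℝ × ℝ => ((2*π)⁻¹ * (p.1 ^ 3 * rexp (-p.1^2/2))) *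
        (max 0 (Real.cos p.2) * max 0 (Real.cos (p.2 - θ))))
      (Set.Ioi 0 ×ˢ Set.Ioo (-π) π) := by
    rintro ⟨r, φ⟩ ⟨hr, -⟩
    have hr0 : (0:ℝ) ≤ r := le_of_lt hr
    simp only [polarCoord_symm_apply, hF, smul_eq_mul]
    have hsq : (r * Real.cos φ)^2 + (r * Real.sin φ)^2 = r^2 := by
      have h := Real.sin_sq_add_cos_sq φ
      nlinarith [h]
    rw [hsq]
    have hmax1 : max 0 (r * Real.cos φ) = r * max 0 (Real.cos φ) := by
      rw [mul_max_of_nonneg _ _ hr0, mul_zero]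
    have harg : ρ * (r * Real.cos φ) + Real.sqrt (1 - ρ^2) * (r * Real.sin φ)
        = r * Real.cos (φ - θ) := by
      rw [hsin, ← hcos, Real.cos_sub]
      ring
    have hmax2 : max 0 (ρ * (r * Real.cos φ) + Real.sqrt (1 - ρ^2) * (r * Real.sin φ))
        = r * max 0 (Real.cos (φ - θ)) := by
      rw [harg, mul_max_of_nonneg _ _ hr0, mul_zero]
    rw [hmax1, hmax2]
    ring
  rw [setIntegral_congr_fun (measurableSet_Ioi.prod measurableSet_Ioo) hEq,
    Measure.volume_eq_prod, ← Measure.prod_restrict]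
  show (∫ z : ℝ × ℝ, (fun r : ℝ => (2*π)⁻¹ * (r ^ 3 * rexp (-r^2/2))) z.1 *
      (fun φ : ℝ => max 0 (Real.cos φ) * max 0 (Real.cos (φ - θ))) z.2
      ∂(volume.restrict (Set.Ioi 0)).prod (volume.restrict (Set.Ioo (-π) π))) = _
  have hpm := MeasureTheory.integral_prod_mul (μ := (volume : Measure ℝ).restrict (Set.Ioi 0))
    (ν := (volume : Measure ℝ).restrict (Set.Ioo (-π) π))
    (fun r : ℝ => (2*π)⁻¹ * (r ^ 3 * rexp (-r^2/2)))
    (fun φ : ℝ => max 0 (Real.cos φ) * max 0 (Real.cos (φ - θ)))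
  rw [hpm, integral_const_mul, radial_integral, angular_integral hθ0 hθπ, hcos]
  field_simp
end

section
/- Define F_q(ρ) = E[max{h₁,...,h_q}·max{h₁',...,h_q'}] where h₁,...,h_q are i.i.d. N(0,1), h₁',...,h_q' are i.i.d. N(0,1), and Cov(h_l, h_m') = ρ·1{l=m}. Then F₂(ρ) = 2·E[max(0,k₁)·max(0,k₂)] where (k₁,k₂) is mean-zero Gaussian with unit variances and correlation ρ. -/
open MeasureTheory ProbabilityTheory Real NNReal

noncomputable section AuxGauss

local notation "γ" => gaussianReal 0 1
local notation "μ2" => Measure.prod (gaussianReal 0 1) (gaussianReal 0 1)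
local notation "μ4" => Measure.prod (Measure.prod (gaussianReal 0 1) (gaussianReal 0 1))
  (Measure.prod (gaussianReal 0 1) (gaussianReal 0 1))




lemma iSup_fin_two (f : Fin 2 → ℝ) : (⨆ i, f i) = max (f 0) (f 1) := by
  apply le_antisymm
  · refine ciSup_le fun i => ?_
    fin_cases i
    exacts [le_max_left _ _, le_max_right _ _]
  · exact max_le (le_ciSup (Set.Finite.bddAbove (Set.finite_range f)) 0)
      (le_ciSup (Set.Finite.bddAbove (Set.finite_range f)) 1)

lemma max_zero_eq (a : ℝ) : max 0 a = (a + |a|) / 2 := by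
  rcases le_total a 0 with h | h
  · rw [max_eq_left h, abs_of_nonpos h]; ring
  · rw [max_eq_right h, abs_of_nonneg h]; ring

lemma max_rot (B D : ℝ) : max ((B + D) / Real.sqrt 2) ((B - D) / Real.sqrt 2)
    = (B + |D|) / Real.sqrt 2 := by
  have h2 : (0:ℝ) < Real.sqrt 2 := by positivity
  rw [max_div_div_right h2.le]
  congr 1
  rcases le_total D 0 with h | h
  · rw [abs_of_nonpos h, max_eq_right (by linarith)]; ring
  · rw [abs_of_nonneg h, max_eq_left (by linarith)]

/-- negation preserves the standard gaussian -/
lemma gauss_neg : MeasurePreserving (fun x : ℝ => -x) γ γ := by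
  refine ⟨measurable_neg, ?_⟩
  have h2 : (fun x : ℝ => -x) = (fun x : ℝ => (-1 : ℝ) * x) := funext fun x => by ring
  rw [h2, show (fun x : ℝ => (-1 : ℝ) * x) = ((-1 : ℝ) * ·) from rfl,
    gaussianReal_map_const_mul (-1)]
  have h1 : (⟨(-1:ℝ)^2, sq_nonneg _⟩ : ℝ≥0) * 1 = 1 := by ext; norm_num
  congr 1
  · norm_num

lemma integrable_gauss_iff (g : ℝ → ℝ) :
    Integrable g γ ↔ Integrable (fun x => g x * gaussianPDFReal 0 1 x) := by
  rw [gaussianReal_of_var_ne_zero 0 one_ne_zero,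
    integrable_withDensity_iff (measurable_gaussianPDF 0 1)
      (Filter.Eventually.of_forall fun x => ENNReal.ofReal_lt_top)]
  simp_rw [gaussianPDF, ENNReal.toReal_ofReal (gaussianPDFReal_nonneg 0 1 _)]

lemma gaussianPDFReal_zero_one (x : ℝ) :
    gaussianPDFReal 0 1 x = (Real.sqrt (2 * π))⁻¹ * rexp (-(1/2) * x ^ 2) := by
  simp only [gaussianPDFReal, NNReal.coe_one, mul_one, sub_zero]
  congr 1
  ring

lemma integrable_id_gauss : Integrable (fun x : ℝ => x) γ := by
  rw [integrable_gauss_iff]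
  have h := (integrable_mul_exp_neg_mul_sq (b := 1/2) (by norm_num)).const_mul
    (Real.sqrt (2 * π))⁻¹
  refine h.congr (Filter.Eventually.of_forall fun x => ?_)
  simp only [gaussianPDFReal_zero_one]; ring

lemma integrable_sq_gauss : Integrable (fun x : ℝ => x * x) γ := by
  rw [integrable_gauss_iff]
  have h := (integrable_rpow_mul_exp_neg_mul_sq (b := 1/2) (by norm_num)
    (s := 2) (by norm_num)).const_mul (Real.sqrt (2 * π))⁻¹
  refine h.congr (Filter.Eventually.of_forall fun x => ?_)
  have hx : x ^ (2:ℝ) = x * x := by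
    rw [show (2:ℝ) = ((2:ℕ):ℝ) by norm_num, Real.rpow_natCast]; ring
  simp only [gaussianPDFReal_zero_one, hx]; ring

lemma integrable_abs_gauss : Integrable (fun x : ℝ => |x|) γ :=
  integrable_id_gauss.abs

lemma integral_id_gauss : ∫ x, x ∂γ = 0 := by
  have h := gauss_neg.integral_comp (Homeomorph.neg ℝ).measurableEmbedding (fun x => x)
  change ∫ x, -x ∂γ = ∫ x, x ∂γ at h
  rw [integral_neg] at h
  linarith [h]





lemma sqrt2_sq : Real.sqrt 2 * Real.sqrt 2 = 2 := Real.mul_self_sqrt (by norm_num)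

lemma rot_aux (u v : ℝ) : ((u + v) / Real.sqrt 2 - (v - u) / Real.sqrt 2) / Real.sqrt 2 = u ∧
    ((u + v) / Real.sqrt 2 + (v - u) / Real.sqrt 2) / Real.sqrt 2 = v := by
  have h2 : Real.sqrt 2 ≠ 0 := by positivity
  have h2 : Real.sqrt 2 ≠ 0 := by positivity
  constructor
  · rw [div_sub_div_same, div_div, sqrt2_sq]; ring
  · rw [← add_div, div_div, sqrt2_sq]; ring

/-- the 45° rotation as a measurable equiv of `ℝ × ℝ` -/
def rotEquiv : (ℝ × ℝ) ≃ᵐ (ℝ × ℝ) where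
  toFun := fun p => ((p.1 + p.2) / Real.sqrt 2, (p.2 - p.1) / Real.sqrt 2)
  invFun := fun q => ((q.1 - q.2) / Real.sqrt 2, (q.1 + q.2) / Real.sqrt 2)
  left_inv := by
    rintro ⟨u, v⟩
    have h := rot_aux u v
    ext
    · simpa using h.1
    · simpa using h.2
  right_inv := by
    rintro ⟨a, b⟩
    have h2 : Real.sqrt 2 ≠ 0 := by positivity
    ext
    · show (((a - b)/Real.sqrt 2) + ((a + b)/Real.sqrt 2)) / Real.sqrt 2 = a
      rw [← add_div, div_div, sqrt2_sq]; ring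
    · show (((a + b)/Real.sqrt 2) - ((a - b)/Real.sqrt 2)) / Real.sqrt 2 = b
      rw [div_sub_div_same, div_div, sqrt2_sq]; ring
  measurable_toFun := by
    show Measurable fun p : ℝ × ℝ => ((p.1 + p.2) / Real.sqrt 2, (p.2 - p.1) / Real.sqrt 2)
    fun_prop
  measurable_invFun := by
    show Measurable fun q : ℝ × ℝ => ((q.1 - q.2) / Real.sqrt 2, (q.1 + q.2) / Real.sqrt 2)
    fun_prop

/-- the rotation as a linear map -/
def rotLin : (ℝ × ℝ) →ₗ[ℝ] (ℝ × ℝ) where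
  toFun := fun p => ((p.1 + p.2) / Real.sqrt 2, (p.2 - p.1) / Real.sqrt 2)
  map_add' := by intro p q; ext <;> simp <;> ring
  map_smul' := by intro c p; ext <;> simp <;> ring

lemma rotLin_det : LinearMap.det rotLin = 1 := by
  have h2 : Real.sqrt 2 ≠ 0 := by positivity
  rw [← LinearMap.det_toMatrix (Module.Basis.finTwoProd ℝ), Matrix.det_fin_two]
  simp only [LinearMap.toMatrix_apply, Module.Basis.finTwoProd_zero, Module.Basis.finTwoProd_one,
    Module.Basis.coe_finTwoProd_repr]
  simp only [rotLin, LinearMap.coe_mk, AddHom.coe_mk]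
  have h : ((Real.sqrt 2)⁻¹ : ℝ) * (Real.sqrt 2)⁻¹ = 1/2 := by
    rw [← mul_inv, sqrt2_sq]; norm_num
  have h' : ((Real.sqrt 2)⁻¹ : ℝ) ^ 2 = 1/2 := by rw [sq, h]
  norm_num
  rw [h]
  ring_nf
  rw [h']
  norm_num

lemma rot_volume : MeasurePreserving rotEquiv (volume : Measure (ℝ × ℝ)) volume := by
  refine ⟨rotEquiv.measurable, ?_⟩
  have h : Measure.map rotLin (volume : Measure (ℝ × ℝ))
      = ENNReal.ofReal |(LinearMap.det rotLin)⁻¹| • volume :=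
    Measure.map_linearMap_addHaar_eq_smul_addHaar volume (by rw [rotLin_det]; norm_num)
  rw [rotLin_det] at h
  rw [show (⇑rotLin : ℝ × ℝ → ℝ × ℝ) = ⇑rotEquiv from rfl] at h
  simpa using h





lemma sqrt2_sq' : Real.sqrt 2 * Real.sqrt 2 = 2 := Real.mul_self_sqrt (by norm_num)

lemma map_withDensity_equiv {α β : Type*} [MeasurableSpace α] [MeasurableSpace β]
    (e : α ≃ᵐ β) (μ : Measure α) {g : β → ENNReal} (hg : Measurable g) :
    Measure.map e (μ.withDensity (fun x => g (e x))) = (Measure.map e μ).withDensity g := by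
  ext s hs
  rw [Measure.map_apply e.measurable hs, withDensity_apply _ (e.measurable hs),
    withDensity_apply _ hs, setLIntegral_map hs hg e.measurable]

lemma gauss2_prod : (Measure.prod γ γ) = (volume : Measure (ℝ × ℝ)).withDensity
    (fun p => gaussianPDF 0 1 p.1 * gaussianPDF 0 1 p.2) := by
  refine (Measure.prod_eq fun s t hs ht => ?_)
  rw [Measure.volume_eq_prod, withDensity_apply _ (hs.prod ht), ← Measure.prod_restrict,
    lintegral_prod_mul (measurable_gaussianPDF 0 1).aemeasurable
      (measurable_gaussianPDF 0 1).aemeasurable,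
    gaussianReal_apply 0 one_ne_zero s, gaussianReal_apply 0 one_ne_zero t]


section rotg
noncomputable def Gdens : ℝ × ℝ → ENNReal :=
  fun p => gaussianPDF 0 1 p.1 * gaussianPDF 0 1 p.2

lemma Gdens_meas : Measurable Gdens :=
  ((measurable_gaussianPDF 0 1).comp measurable_fst).mul
    ((measurable_gaussianPDF 0 1).comp measurable_snd)

lemma gaussianPDFReal_zero_one' (x : ℝ) :
    gaussianPDFReal 0 1 x = (Real.sqrt (2 * π))⁻¹ * rexp (-(1/2) * x ^ 2) := by
  simp only [gaussianPDFReal, NNReal.coe_one, mul_one, sub_zero]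
  congr 1
  ring

lemma pdfReal_rot (u v : ℝ) :
    gaussianPDFReal 0 1 ((u + v) / Real.sqrt 2) * gaussianPDFReal 0 1 ((v - u) / Real.sqrt 2)
      = gaussianPDFReal 0 1 u * gaussianPDFReal 0 1 v := by
  have hs : ((u + v) / Real.sqrt 2) ^ 2 + ((v - u) / Real.sqrt 2) ^ 2 = u ^ 2 + v ^ 2 := by
    rw [div_pow, div_pow, Real.sq_sqrt (by norm_num : (2:ℝ) ≥ 0)]
    ring
  simp only [gaussianPDFReal_zero_one']
  rw [mul_mul_mul_comm, ← Real.exp_add, mul_mul_mul_comm, ← Real.exp_add]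
  congr 2
  linarith [hs]

lemma Gdens_rot (p : ℝ × ℝ) : Gdens (rotEquiv p) = Gdens p := by
  obtain ⟨u, v⟩ := p
  show gaussianPDF 0 1 ((u + v) / Real.sqrt 2) * gaussianPDF 0 1 ((v - u) / Real.sqrt 2)
      = gaussianPDF 0 1 u * gaussianPDF 0 1 v
  simp only [gaussianPDF, ← ENNReal.ofReal_mul (gaussianPDFReal_nonneg 0 1 _)]
  rw [pdfReal_rot]

lemma rot_gauss : MeasurePreserving rotEquiv (Measure.prod γ γ) (Measure.prod γ γ) := by
  refine ⟨rotEquiv.measurable, ?_⟩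
  rw [gauss2_prod]
  show Measure.map rotEquiv (volume.withDensity Gdens) = volume.withDensity Gdens
  conv_lhs => rw [show Gdens = fun x => Gdens (rotEquiv x) from funext fun p => (Gdens_rot p).symm]
  rw [map_withDensity_equiv rotEquiv volume Gdens_meas, rot_volume.map_eq]
end rotg

/-- the shuffle `((a,b),(c,d)) ↦ ((a,c),(b,d))` as a measurable equiv -/
def shuffleEquiv : ((ℝ × ℝ) × (ℝ × ℝ)) ≃ᵐ ((ℝ × ℝ) × (ℝ × ℝ)) where
  toFun := fun p => ((p.1.1, p.2.1), (p.1.2, p.2.2))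
  invFun := fun p => ((p.1.1, p.2.1), (p.1.2, p.2.2))
  left_inv := by rintro ⟨⟨a, b⟩, ⟨c, d⟩⟩; rfl
  right_inv := by rintro ⟨⟨a, b⟩, ⟨c, d⟩⟩; rfl
  measurable_toFun := by
    show Measurable fun p : (ℝ × ℝ) × (ℝ × ℝ) => ((p.1.1, p.2.1), (p.1.2, p.2.2))
    fun_prop
  measurable_invFun := by
    show Measurable fun p : (ℝ × ℝ) × (ℝ × ℝ) => ((p.1.1, p.2.1), (p.1.2, p.2.2))
    fun_prop

lemma shuffle_mp : MeasurePreserving shuffleEquiv μ4 μ4 := by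
  have hσ : MeasurePreserving
      (⇑MeasurableEquiv.prodAssoc ∘ (Prod.map Prod.swap (id : ℝ → ℝ)) ∘
        ⇑(MeasurableEquiv.prodAssoc.symm))
      (Measure.prod γ μ2) (Measure.prod γ μ2) := by
    refine MeasurePreserving.comp (measurePreserving_prodAssoc γ γ γ) ?_
    refine MeasurePreserving.comp ?_
      ((measurePreserving_prodAssoc γ γ γ).symm MeasurableEquiv.prodAssoc)
    exact Measure.measurePreserving_swap.prod (MeasurePreserving.id γ)
  have h1 : MeasurePreserving (⇑MeasurableEquiv.prodAssoc) μ4 (Measure.prod γ (Measure.prod γ μ2)) :=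
    measurePreserving_prodAssoc γ γ μ2
  have h2 : MeasurePreserving (Prod.map (id : ℝ → ℝ)
      (⇑MeasurableEquiv.prodAssoc ∘ (Prod.map Prod.swap (id : ℝ → ℝ)) ∘
        ⇑(MeasurableEquiv.prodAssoc.symm)))
      (Measure.prod γ (Measure.prod γ μ2)) (Measure.prod γ (Measure.prod γ μ2)) :=
    (MeasurePreserving.id γ).prod hσ
  have h3 : MeasurePreserving (⇑(MeasurableEquiv.prodAssoc.symm))
      (Measure.prod γ (Measure.prod γ μ2)) μ4 :=
    (measurePreserving_prodAssoc γ γ μ2).symm MeasurableEquiv.prodAssoc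
  have hcomp := h3.comp (h2.comp h1)
  have heq : (⇑(MeasurableEquiv.prodAssoc.symm) ∘ (Prod.map (id : ℝ → ℝ)
      (⇑MeasurableEquiv.prodAssoc ∘ (Prod.map Prod.swap (id : ℝ → ℝ)) ∘
        ⇑(MeasurableEquiv.prodAssoc.symm))) ∘ ⇑MeasurableEquiv.prodAssoc)
      = ⇑shuffleEquiv := by
    funext p
    obtain ⟨⟨a, b⟩, ⟨c, d⟩⟩ := p
    rfl
  rwa [heq] at hcomp






section integrab
variable (ρ c : ℝ)

lemma i_fst : Integrable (fun a : ℝ × ℝ => a.1) μ2 := by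
  simpa using integrable_id_gauss.mul_prod (integrable_const (1:ℝ))

lemma i_snd : Integrable (fun a : ℝ × ℝ => a.2) μ2 := by
  simpa using (integrable_const (1:ℝ)).mul_prod integrable_id_gauss

lemma i_absfst : Integrable (fun a : ℝ × ℝ => |a.1|) μ2 := by
  simpa using integrable_abs_gauss.mul_prod (integrable_const (1:ℝ))

lemma i_sqfst : Integrable (fun a : ℝ × ℝ => a.1 * a.1) μ2 := by
  simpa using integrable_sq_gauss.mul_prod (integrable_const (1:ℝ))

lemma i_sqabsfst : Integrable (fun a : ℝ × ℝ => |a.1| * |a.1|) μ2 := by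
  refine i_sqfst.congr (Filter.Eventually.of_forall fun a => ?_)
  simp [abs_mul_abs_self]

lemma i_fstsnd : Integrable (fun a : ℝ × ℝ => a.1 * a.2) μ2 :=
  integrable_id_gauss.mul_prod integrable_id_gauss

lemma i_absprod : Integrable (fun a : ℝ × ℝ => |a.1| * |a.2|) μ2 :=
  integrable_abs_gauss.mul_prod integrable_abs_gauss

lemma i_lin : Integrable (fun a : ℝ × ℝ => ρ * a.1 + c * a.2) μ2 :=
  (i_fst.const_mul ρ).add (i_snd.const_mul c)

lemma i_absE : Integrable (fun a : ℝ × ℝ => |ρ * a.1 + c * a.2|) μ2 := (i_lin ρ c).abs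

lemma i_fstE : Integrable (fun a : ℝ × ℝ => a.1 * (ρ * a.1 + c * a.2)) μ2 := by
  refine ((i_sqfst.const_mul ρ).add ((i_fstsnd).const_mul c)).congr
    (Filter.Eventually.of_forall fun a => ?_)
  simp only [Pi.add_apply]; ring

lemma i_bnd : Integrable (fun a : ℝ × ℝ => |ρ| * (|a.1| * |a.1|) + |c| * (|a.1| * |a.2|)) μ2 :=
  (i_sqabsfst.const_mul _).add (i_absprod.const_mul _)

lemma bnd_ineq (a : ℝ × ℝ) :
    |a.1| * |ρ * a.1 + c * a.2| ≤ |ρ| * (|a.1| * |a.1|) + |c| * (|a.1| * |a.2|) := by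
  have hE : |ρ * a.1 + c * a.2| ≤ |ρ| * |a.1| + |c| * |a.2| :=
    (abs_add_le _ _).trans (by rw [abs_mul, abs_mul])
  nlinarith [abs_nonneg a.1, abs_nonneg a.2, abs_nonneg (ρ * a.1 + c * a.2)]

lemma i_absfstE : Integrable (fun a : ℝ × ℝ => |a.1| * |ρ * a.1 + c * a.2|) μ2 := by
  refine (i_bnd ρ c).mono' ?_ (Filter.Eventually.of_forall fun a => ?_)
  · exact ((measurable_fst.abs).mul
      (((measurable_fst.const_mul ρ).add (measurable_snd.const_mul c)).abs)).aestronglyMeasurable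
  · rw [Real.norm_eq_abs, abs_of_nonneg (by positivity)]
    exact bnd_ineq ρ c a

lemma i_fstabsE : Integrable (fun a : ℝ × ℝ => a.1 * |ρ * a.1 + c * a.2|) μ2 := by
  refine (i_bnd ρ c).mono' ?_ (Filter.Eventually.of_forall fun a => ?_)
  · exact (measurable_fst.mul
      (((measurable_fst.const_mul ρ).add (measurable_snd.const_mul c)).abs)).aestronglyMeasurable
  · rw [Real.norm_eq_abs, abs_mul, abs_abs]
    exact bnd_ineq ρ c a

lemma i_absfstlin : Integrable (fun a : ℝ × ℝ => |a.1| * (ρ * a.1 + c * a.2)) μ2 := by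
  refine (i_bnd ρ c).mono' ?_ (Filter.Eventually.of_forall fun a => ?_)
  · exact ((measurable_fst.abs).mul
      ((measurable_fst.const_mul ρ).add (measurable_snd.const_mul c))).aestronglyMeasurable
  · rw [Real.norm_eq_abs, abs_mul, abs_abs]
    exact bnd_ineq ρ c a

end integrab

section integrals
variable (ρ c : ℝ)

lemma m_one : ∫ (_ : ℝ × ℝ), (1:ℝ) ∂μ2 = 1 := by simp

lemma m_fst : ∫ a, a.1 ∂μ2 = 0 := by
  have h := integral_prod_mul (μ := γ) (ν := γ) (fun x : ℝ => x) (fun _ : ℝ => (1:ℝ))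
  simpa [integral_id_gauss] using h

lemma m_snd : ∫ a, a.2 ∂μ2 = 0 := by
  have h := integral_prod_mul (μ := γ) (ν := γ) (fun _ : ℝ => (1:ℝ)) (fun x : ℝ => x)
  simpa [integral_id_gauss] using h

lemma m_sqfst : ∫ a, a.1 * a.1 ∂μ2 = ∫ x, x * x ∂γ := by
  have h := integral_prod_mul (μ := γ) (ν := γ) (fun x : ℝ => x * x) (fun _ : ℝ => (1:ℝ))
  simpa using h

lemma m_fstsnd : ∫ a, a.1 * a.2 ∂μ2 = 0 := by
  have h := integral_prod_mul (μ := γ) (ν := γ) (fun x : ℝ => x) (fun x : ℝ => x)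
  simpa [integral_id_gauss] using h

lemma m_lin : ∫ a, (ρ * a.1 + c * a.2) ∂μ2 = 0 := by
  rw [integral_add ((i_fst).const_mul ρ) ((i_snd).const_mul c), integral_const_mul,
    integral_const_mul, m_fst, m_snd]
  ring

lemma m_fstE : ∫ a, a.1 * (ρ * a.1 + c * a.2) ∂μ2 = ρ * ∫ x, x * x ∂γ := by
  have he : ∀ a : ℝ × ℝ, a.1 * (ρ * a.1 + c * a.2) = ρ * (a.1 * a.1) + c * (a.1 * a.2) := by
    intro a; ring
  simp_rw [he]
  rw [integral_add ((i_sqfst).const_mul ρ) ((i_fstsnd).const_mul c), integral_const_mul,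
    integral_const_mul, m_sqfst, m_fstsnd]
  ring

/-- integral of an odd function vanishes under the two-sided sign flip -/
lemma integral_odd_pair (f : ℝ × ℝ → ℝ) (hf : ∀ a b : ℝ, f (-a, -b) = - f (a, b)) :
    ∫ a, f a ∂μ2 = 0 := by
  have hneg : MeasurePreserving
      (⇑(MeasurableEquiv.prodCongr (Homeomorph.neg ℝ).toMeasurableEquiv
        (Homeomorph.neg ℝ).toMeasurableEquiv)) μ2 μ2 := gauss_neg.prod gauss_neg
  have h := hneg.integral_comp (MeasurableEquiv.prodCongr _ _).measurableEmbedding f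
  have h2 : ∫ a : ℝ × ℝ, f (-a.1, -a.2) ∂μ2 = ∫ a, f a ∂μ2 := h
  simp_rw [hf] at h2
  rw [integral_neg] at h2
  linarith

lemma m_fstabsE : ∫ a, a.1 * |ρ * a.1 + c * a.2| ∂μ2 = 0 := by
  refine integral_odd_pair _ fun a b => ?_
  have h : ρ * -a + c * -b = -(ρ * a + c * b) := by ring
  show -a * |ρ * -a + c * -b| = -(a * |ρ * a + c * b|)
  rw [h, abs_neg]; ring

lemma m_absfstlin : ∫ a, |a.1| * (ρ * a.1 + c * a.2) ∂μ2 = 0 := by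
  refine integral_odd_pair _ fun a b => ?_
  have h : ρ * -a + c * -b = -(ρ * a + c * b) := by ring
  show |-a| * (ρ * -a + c * -b) = -(|a| * (ρ * a + c * b))
  rw [h, abs_neg]; ring

end integrals


lemma rhs_eval (ρ c : ℝ) : ∫ p : ℝ × ℝ, max 0 p.1 * max 0 (ρ * p.1 + c * p.2) ∂μ2
    = (ρ * ∫ x, x * x ∂γ + ∫ a, |a.1| * |ρ * a.1 + c * a.2| ∂μ2) / 4 := by
  have hpt : ∀ p : ℝ × ℝ, max 0 p.1 * max 0 (ρ * p.1 + c * p.2)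
      = (1/4) * (p.1 * (ρ * p.1 + c * p.2) + (p.1 * |ρ * p.1 + c * p.2|
          + (|p.1| * (ρ * p.1 + c * p.2) + |p.1| * |ρ * p.1 + c * p.2|))) := by
    intro p; rw [max_zero_eq, max_zero_eq]; ring
  simp_rw [hpt]
  have hA3 : Integrable (fun a : ℝ × ℝ => |a.1| * (ρ * a.1 + c * a.2)
      + |a.1| * |ρ * a.1 + c * a.2|) μ2 := (i_absfstlin ρ c).add (i_absfstE ρ c)
  have hA2 : Integrable (fun a : ℝ × ℝ => a.1 * |ρ * a.1 + c * a.2|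
      + (|a.1| * (ρ * a.1 + c * a.2) + |a.1| * |ρ * a.1 + c * a.2|)) μ2 :=
    (i_fstabsE ρ c).add hA3
  rw [integral_const_mul, integral_add (i_fstE ρ c) hA2, integral_add (i_fstabsE ρ c) hA3,
    integral_add (i_absfstlin ρ c) (i_absfstE ρ c),
    m_fstE, m_fstabsE, m_absfstlin]
  ring

lemma lhs_eval (ρ c : ℝ) :
    (∫ p : (Fin 2 → ℝ) × (Fin 2 → ℝ),
      (⨆ i, p.1 i) * (⨆ i, ρ * p.1 i + c * p.2 i)
      ∂((Measure.pi fun _ : Fin 2 => gaussianReal 0 1).prod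
          (Measure.pi fun _ : Fin 2 => gaussianReal 0 1)))
    = (ρ * ∫ x, x * x ∂γ + ∫ a, |a.1| * |ρ * a.1 + c * a.2| ∂μ2) / 2 := by
  set g : (ℝ × ℝ) × (ℝ × ℝ) → ℝ := fun q =>
    max q.1.1 q.1.2 * max (ρ * q.1.1 + c * q.2.1) (ρ * q.1.2 + c * q.2.2) with hg
  have h0 : (∫ p : (Fin 2 → ℝ) × (Fin 2 → ℝ),
      (⨆ i, p.1 i) * (⨆ i, ρ * p.1 i + c * p.2 i)
      ∂((Measure.pi fun _ : Fin 2 => gaussianReal 0 1).prod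
          (Measure.pi fun _ : Fin 2 => gaussianReal 0 1))) = ∫ q, g q ∂μ4 := by
    have hmp : MeasurePreserving
        (⇑(MeasurableEquiv.prodCongr (MeasurableEquiv.finTwoArrow (α := ℝ))
          (MeasurableEquiv.finTwoArrow (α := ℝ))))
        ((Measure.pi fun _ : Fin 2 => gaussianReal 0 1).prod
          (Measure.pi fun _ : Fin 2 => gaussianReal 0 1)) μ4 :=
      (measurePreserving_finTwoArrow γ).prod (measurePreserving_finTwoArrow γ)
    have h := hmp.integral_comp (MeasurableEquiv.prodCongr _ _).measurableEmbedding g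
    rw [← h]
    refine integral_congr_ae (Filter.Eventually.of_forall fun p => ?_)
    show (⨆ i, p.1 i) * (⨆ i, ρ * p.1 i + c * p.2 i)
      = g ((MeasurableEquiv.prodCongr MeasurableEquiv.finTwoArrow MeasurableEquiv.finTwoArrow) p)
    rw [iSup_fin_two p.1, iSup_fin_two (fun i => ρ * p.1 i + c * p.2 i)]
    rfl
  have h1 : ∫ q, g q ∂μ4 = ∫ q, g (Prod.map rotEquiv rotEquiv q) ∂μ4 := by
    have hmp : MeasurePreserving (⇑(MeasurableEquiv.prodCongr rotEquiv rotEquiv)) μ4 μ4 :=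
      rot_gauss.prod rot_gauss
    exact (hmp.integral_comp (MeasurableEquiv.prodCongr _ _).measurableEmbedding g).symm
  have h2 : ∫ q, g (Prod.map rotEquiv rotEquiv q) ∂μ4
      = ∫ q, g (Prod.map rotEquiv rotEquiv (shuffleEquiv q)) ∂μ4 :=
    (shuffle_mp.integral_comp shuffleEquiv.measurableEmbedding
      (fun q => g (Prod.map rotEquiv rotEquiv q))).symm
  have hpt : ∀ q : (ℝ × ℝ) × (ℝ × ℝ), g (Prod.map rotEquiv rotEquiv (shuffleEquiv q))
      = (1/2) * ((1:ℝ) * (q.2.1 * (ρ * q.2.1 + c * q.2.2))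
        + (|ρ * q.1.1 + c * q.1.2| * q.2.1
        + (|q.1.1| * (ρ * q.2.1 + c * q.2.2)
        + (|q.1.1| * |ρ * q.1.1 + c * q.1.2|) * 1))) := by
    rintro ⟨⟨u, t⟩, ⟨v, s⟩⟩
    show max ((u + v) / Real.sqrt 2) ((v - u) / Real.sqrt 2)
        * max (ρ * ((u + v) / Real.sqrt 2) + c * ((t + s) / Real.sqrt 2))
            (ρ * ((v - u) / Real.sqrt 2) + c * ((s - t) / Real.sqrt 2)) = _
    rw [show (u + v) / Real.sqrt 2 = (v + u) / Real.sqrt 2 by ring,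
      max_rot v u,
      show ρ * ((v + u) / Real.sqrt 2) + c * ((t + s) / Real.sqrt 2)
        = ((ρ * v + c * s) + (ρ * u + c * t)) / Real.sqrt 2 by ring,
      show ρ * ((v - u) / Real.sqrt 2) + c * ((s - t) / Real.sqrt 2)
        = ((ρ * v + c * s) - (ρ * u + c * t)) / Real.sqrt 2 by ring,
      max_rot (ρ * v + c * s) (ρ * u + c * t),
      div_mul_div_comm, sqrt2_sq']
    ring
  rw [h0, h1, h2]
  simp_rw [hpt]
  have hB1 : Integrable (fun q : (ℝ × ℝ) × (ℝ × ℝ) =>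
      (1:ℝ) * (q.2.1 * (ρ * q.2.1 + c * q.2.2))) μ4 :=
    (integrable_const (1:ℝ)).mul_prod (i_fstE ρ c)
  have hB2 : Integrable (fun q : (ℝ × ℝ) × (ℝ × ℝ) =>
      |ρ * q.1.1 + c * q.1.2| * q.2.1) μ4 := (i_absE ρ c).mul_prod i_fst
  have hB3 : Integrable (fun q : (ℝ × ℝ) × (ℝ × ℝ) =>
      |q.1.1| * (ρ * q.2.1 + c * q.2.2)) μ4 := i_absfst.mul_prod (i_lin ρ c)
  have hB4 : Integrable (fun q : (ℝ × ℝ) × (ℝ × ℝ) =>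
      (|q.1.1| * |ρ * q.1.1 + c * q.1.2|) * 1) μ4 :=
    (i_absfstE ρ c).mul_prod (integrable_const (1:ℝ))
  have hB34 : Integrable (fun q : (ℝ × ℝ) × (ℝ × ℝ) =>
      |q.1.1| * (ρ * q.2.1 + c * q.2.2) + (|q.1.1| * |ρ * q.1.1 + c * q.1.2|) * 1) μ4 :=
    hB3.add hB4
  have hB234 : Integrable (fun q : (ℝ × ℝ) × (ℝ × ℝ) =>
      |ρ * q.1.1 + c * q.1.2| * q.2.1 + (|q.1.1| * (ρ * q.2.1 + c * q.2.2)
        + (|q.1.1| * |ρ * q.1.1 + c * q.1.2|) * 1)) μ4 := hB2.add hB34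
  have e1 : ∫ q : (ℝ × ℝ) × (ℝ × ℝ), (1:ℝ) * (q.2.1 * (ρ * q.2.1 + c * q.2.2)) ∂μ4
      = (∫ (_ : ℝ × ℝ), (1:ℝ) ∂μ2) * ∫ b : ℝ × ℝ, b.1 * (ρ * b.1 + c * b.2) ∂μ2 :=
    integral_prod_mul (fun _ : ℝ × ℝ => (1:ℝ)) (fun b : ℝ × ℝ => b.1 * (ρ * b.1 + c * b.2))
  have e2 : ∫ q : (ℝ × ℝ) × (ℝ × ℝ), |ρ * q.1.1 + c * q.1.2| * q.2.1 ∂μ4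
      = (∫ a : ℝ × ℝ, |ρ * a.1 + c * a.2| ∂μ2) * ∫ b : ℝ × ℝ, b.1 ∂μ2 :=
    integral_prod_mul (fun a : ℝ × ℝ => |ρ * a.1 + c * a.2|) (fun b : ℝ × ℝ => b.1)
  have e3 : ∫ q : (ℝ × ℝ) × (ℝ × ℝ), |q.1.1| * (ρ * q.2.1 + c * q.2.2) ∂μ4
      = (∫ a : ℝ × ℝ, |a.1| ∂μ2) * ∫ b : ℝ × ℝ, (ρ * b.1 + c * b.2) ∂μ2 :=
    integral_prod_mul (fun a : ℝ × ℝ => |a.1|) (fun b : ℝ × ℝ => ρ * b.1 + c * b.2)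
  have e4 : ∫ q : (ℝ × ℝ) × (ℝ × ℝ), (|q.1.1| * |ρ * q.1.1 + c * q.1.2|) * 1 ∂μ4
      = (∫ a : ℝ × ℝ, |a.1| * |ρ * a.1 + c * a.2| ∂μ2) * ∫ (_ : ℝ × ℝ), (1:ℝ) ∂μ2 :=
    integral_prod_mul (fun a : ℝ × ℝ => |a.1| * |ρ * a.1 + c * a.2|) (fun _ : ℝ × ℝ => (1:ℝ))
  rw [integral_const_mul, integral_add hB1 hB234, integral_add hB2 hB34, integral_add hB3 hB4,
    e1, e2, e3, e4, m_one, m_fstE, m_fst, m_lin]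
  ring


end AuxGauss

open MeasureTheory ProbabilityTheory Real

/-- `F_q(ρ) = E[max{h₁,…,h_q} ⬝ max{h₁',…,h_q'}]` where the pairs `(h_i, h_i')` are i.i.d.
bivariate standard normals with correlation `ρ`, realized as `h_i = z_i`,
`h_i' = ρ z_i + √(1-ρ²) w_i` for i.i.d. standard normals `z, w`. -/
noncomputable def Fq (q : ℕ) (ρ : ℝ) : ℝ :=
  ∫ p : (Fin q → ℝ) × (Fin q → ℝ),
    (⨆ i, p.1 i) * (⨆ i, ρ * p.1 i + Real.sqrt (1 - ρ ^ 2) * p.2 i)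
    ∂((Measure.pi fun _ : Fin q => gaussianReal 0 1).prod
        (Measure.pi fun _ : Fin q => gaussianReal 0 1))

/-- `F₂(ρ) = 2 E[max(0,k₁) max(0,k₂)]` where `(k₁,k₂)` is centered Gaussian
with unit variances and correlation `ρ` (realized as `k₁ = z₁`, `k₂ = ρ z₁ + √(1-ρ²) z₂`). -/
theorem F_two_eq_two_relu_expectation (ρ : ℝ) (hρ : ρ ∈ Set.Icc (-1 : ℝ) 1) :
    Fq 2 ρ =
      2 * ∫ p : ℝ × ℝ, max 0 p.1 * max 0 (ρ * p.1 + Real.sqrt (1 - ρ ^ 2) * p.2)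
        ∂((gaussianReal 0 1).prod (gaussianReal 0 1)) := by
  have hL := lhs_eval ρ (Real.sqrt (1 - ρ ^ 2))
  have hR := rhs_eval ρ (Real.sqrt (1 - ρ ^ 2))
  have h : Fq 2 ρ = _ := hL
  rw [h, hR]
  ring
end
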